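/- Let A : ℝ → 𝔸 be differentiable at t₀ with derivative A' ∈ 𝔸. Then t ↦ exp(A(t)) is differentiable at t₀, with derivative equal to the interval (Bochner) integral ∫₀¹ exp((1−τ) • A(t₀)) · A' · exp(τ • A(t₀)) dτ. (The Duhamel-type integral representation d/dt exp(A(t)) = ∫₀¹ e^{(1−τ)A} (dA/dt) e^{τA} dτ established in the proof of the third identity of the Theorem of Appendix G.1.) -/

import Mathlib

open NormedSpace MeasureTheory Filter Topology Nat

/-- A crude norm bound for the exponential in a Banach algebra. -/
lemma norm_exp_le_aux {𝔸 : Type*} [NormedRing 𝔸] [NormedAlgebra ℝ 𝔸] [CompleteSpace 𝔸]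
    (a : 𝔸) : ‖exp a‖ ≤ ‖(1 : 𝔸)‖ + Real.exp ‖a‖ := by
  rw [exp_eq_tsum ℝ]
  refine (norm_tsum_le_tsum_norm (norm_expSeries_summable' a)).trans ?_
  have hsum1 : Summable (fun n : ℕ => if n = 0 then ‖(1 : 𝔸)‖ else 0) :=
    (hasSum_ite_eq 0 ‖(1 : 𝔸)‖).summable
  have hsum2 : Summable (fun n : ℕ => ‖a‖ ^ n / n !) := Real.summable_pow_div_factorial ‖a‖
  have hle : ∀ n : ℕ, ‖(n !⁻¹ : ℝ) • a ^ n‖ ≤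
      (if n = 0 then ‖(1 : 𝔸)‖ else 0) + ‖a‖ ^ n / n ! := by
    intro n
    cases n with
    | zero => simp
    | succ n =>
      simp only [Nat.succ_ne_zero, if_false, zero_add, norm_smul, Real.norm_eq_abs, reduceIte]
      rw [abs_of_nonneg (by exact inv_nonneg.mpr (Nat.cast_nonneg _)), div_eq_inv_mul]
      exact mul_le_mul_of_nonneg_left (norm_pow_le' a n.succ_pos) (inv_nonneg.mpr (Nat.cast_nonneg _))
  refine (Summable.tsum_le_tsum hle (norm_expSeries_summable' a) (hsum1.add hsum2)).trans ?_
  rw [Summable.tsum_add hsum1 hsum2, tsum_ite_eq, Real.exp_eq_exp_ℝ, exp_eq_tsum_div]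

/-- Exact Duhamel identity: `exp y - exp x = ∫₀¹ e^{(1-τ)x} (y-x) e^{τy} dτ`. -/
lemma duhamel_identity {𝔸 : Type*} [NormedRing 𝔸] [NormedAlgebra ℝ 𝔸] [CompleteSpace 𝔸]
    (x y : 𝔸) :
    exp y - exp x
      = ∫ τ in (0 : ℝ)..1, exp ((1 - τ) • x) * (y - x) * exp (τ • y) := by
  letI : NormedAlgebra ℚ 𝔸 := .restrictScalars ℚ ℝ 𝔸
  have hder : ∀ τ ∈ Set.uIcc (0 : ℝ) 1,
      HasDerivAt (fun τ : ℝ => exp ((1 - τ) • x) * exp (τ • y))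
        (exp ((1 - τ) • x) * (y - x) * exp (τ • y)) τ := by
    intro τ _
    have h1 : HasDerivAt (fun τ : ℝ => exp ((1 - τ) • x))
        (-(exp ((1 - τ) • x) * x)) τ := by
      have hin : HasDerivAt (fun s : ℝ => 1 - s) (-1) τ := by
        simpa using (hasDerivAt_id' τ).const_sub (1 : ℝ)
      have := (hasDerivAt_exp_smul_const x (1 - τ)).scomp τ hin
      rw [neg_one_smul] at this
      exact this
    have h2 : HasDerivAt (fun τ : ℝ => exp (τ • y)) (y * exp (τ • y)) τ :=
      hasDerivAt_exp_smul_const' y τ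
    have := h1.mul h2
    convert this using 1
    all_goals noncomm_ring
  have hcont : Continuous fun τ : ℝ => exp ((1 - τ) • x) * (y - x) * exp (τ • y) :=
    ((exp_continuous.comp ((continuous_const.sub continuous_id).smul continuous_const)).mul
      continuous_const).mul (exp_continuous.comp (continuous_id.smul continuous_const))
  rw [intervalIntegral.integral_eq_sub_of_hasDerivAt hder
    (hcont.intervalIntegrable 0 1)]
  simp [exp_zero]

/-- **Duhamel-type integral formula from the proof of the third identity of the Theorem of
Appendix G.1.**  Let `𝔸` be a unital Banach algebra over `ℝ` and `A : ℝ → 𝔸` differentiable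
at `t₀` with derivative `A'`.  Then `t ↦ exp(A t)` is differentiable at `t₀` with derivative
given by the interval (Bochner) integral
`∫₀¹ exp((1-τ) • A t₀) * A' * exp(τ • A t₀) dτ`. -/
theorem hasDerivAt_exp_duhamel {𝔸 : Type*} [NormedRing 𝔸] [NormedAlgebra ℝ 𝔸]
    [CompleteSpace 𝔸] (A : ℝ → 𝔸) (A' : 𝔸) (t₀ : ℝ) (hA : HasDerivAt A A' t₀) :
    HasDerivAt (fun t => NormedSpace.exp (A t))
      (∫ τ in (0 : ℝ)..1,
        NormedSpace.exp ((1 - τ) • A t₀) * A' * NormedSpace.exp (τ • A t₀)) t₀ := by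
  letI : NormedAlgebra ℚ 𝔸 := .restrictScalars ℚ ℝ 𝔸
  set x := A t₀ with hx
  rw [hasDerivAt_iff_tendsto_slope]
  -- the slope of `exp ∘ A` as a parametric integral
  have hslope : ∀ t : ℝ, slope (fun t => exp (A t)) t₀ t
      = ∫ τ in (0 : ℝ)..1, exp ((1 - τ) • x) * slope A t₀ t * exp (τ • A t) := by
    intro t
    rw [slope_def_module, show exp (A t) - exp (A t₀) = _ from duhamel_identity x (A t),
      ← intervalIntegral.integral_smul]
    refine intervalIntegral.integral_congr fun τ _ => ?_
    rw [slope_def_module]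
    simp only [mul_smul_comm, smul_mul_assoc]
    rfl
  -- a uniform bound for the exponentials involved
  set C : ℝ := ‖(1 : 𝔸)‖ + Real.exp (‖x‖ + 1) with hCdef
  have hC : ∀ τ ∈ Set.Icc (0 : ℝ) 1, ∀ a : 𝔸, ‖a‖ ≤ ‖x‖ + 1 → ‖exp (τ • a)‖ ≤ C := by
    intro τ hτ a ha
    refine (norm_exp_le_aux _).trans ?_
    have : ‖τ • a‖ ≤ ‖x‖ + 1 := by
      rw [norm_smul, Real.norm_eq_abs, abs_of_nonneg hτ.1]
      calc τ * ‖a‖ ≤ 1 * ‖a‖ := mul_le_mul_of_nonneg_right hτ.2 (norm_nonneg _)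
        _ ≤ ‖x‖ + 1 := by rw [one_mul]; exact ha
    exact add_le_add le_rfl (Real.exp_le_exp.mpr this)
  have hC0 : 0 ≤ C := by positivity
  -- eventual bounds along the filter
  have hAt : Tendsto A (𝓝[≠] t₀) (𝓝 x) := hA.continuousAt.tendsto.mono_left nhdsWithin_le_nhds
  have hball : ∀ᶠ t in 𝓝[≠] t₀, ‖A t‖ ≤ ‖x‖ + 1 := by
    filter_upwards [hAt (Metric.closedBall_mem_nhds x one_pos)] with t ht
    have h1 : ‖A t - x‖ ≤ 1 := by
      rw [← dist_eq_norm]; exact Metric.mem_closedBall.mp ht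
    have h2 : ‖A t‖ - ‖x‖ ≤ ‖A t - x‖ := norm_sub_norm_le _ _
    linarith
  have hsl : Tendsto (slope A t₀) (𝓝[≠] t₀) (𝓝 A') := hasDerivAt_iff_tendsto_slope.mp hA
  have hslb : ∀ᶠ t in 𝓝[≠] t₀, ‖slope A t₀ t‖ ≤ ‖A'‖ + 1 := by
    filter_upwards [hsl (Metric.closedBall_mem_nhds A' one_pos)] with t ht
    have h1 : ‖slope A t₀ t - A'‖ ≤ 1 := by
      rw [← dist_eq_norm]; exact Metric.mem_closedBall.mp ht
    have h2 : ‖slope A t₀ t‖ - ‖A'‖ ≤ ‖slope A t₀ t - A'‖ := norm_sub_norm_le _ _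
    linarith
  -- dominated convergence
  have key := intervalIntegral.tendsto_integral_filter_of_dominated_convergence
      (μ := volume) (a := (0 : ℝ)) (b := 1)
      (F := fun t τ => exp ((1 - τ) • x) * slope A t₀ t * exp (τ • A t))
      (f := fun τ => exp ((1 - τ) • x) * A' * exp (τ • x))
      (l := 𝓝[≠] t₀)
      (fun _ => C * ((‖A'‖ + 1) * C))
      (Eventually.of_forall fun t =>
        (((exp_continuous.comp ((continuous_const.sub continuous_id).smul
          continuous_const)).mul continuous_const).mul
          (exp_continuous.comp (continuous_id.smul continuous_const))).aestronglyMeasurable)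
      ?_ (intervalIntegrable_const) ?_
  · exact key.congr fun t => (hslope t).symm
  · filter_upwards [hball, hslb] with t hb hs
    refine ae_of_all _ fun τ hτ => ?_
    have hτ' : τ ∈ Set.Icc (0 : ℝ) 1 := by
      rw [Set.uIoc_of_le (by norm_num : (0:ℝ) ≤ 1)] at hτ
      exact Set.Ioc_subset_Icc_self hτ
    have h1τ : (1 - τ) ∈ Set.Icc (0 : ℝ) 1 := by
      constructor <;> [linarith [hτ'.2]; linarith [hτ'.1]]
    calc ‖exp ((1 - τ) • x) * slope A t₀ t * exp (τ • A t)‖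
        ≤ ‖exp ((1 - τ) • x) * slope A t₀ t‖ * ‖exp (τ • A t)‖ := norm_mul_le _ _
      _ ≤ (‖exp ((1 - τ) • x)‖ * ‖slope A t₀ t‖) * ‖exp (τ • A t)‖ :=
          mul_le_mul_of_nonneg_right (norm_mul_le _ _) (norm_nonneg _)
      _ ≤ (C * (‖A'‖ + 1)) * C := by
          have e1 : ‖exp ((1 - τ) • x)‖ ≤ C := hC _ h1τ x (by linarith [norm_nonneg x])
          have e2 : ‖exp (τ • A t)‖ ≤ C := hC _ hτ' _ hb
          exact mul_le_mul (mul_le_mul e1 hs (norm_nonneg _) hC0) e2 (norm_nonneg _)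
            (by positivity)
      _ = C * ((‖A'‖ + 1) * C) := by ring
  · refine ae_of_all _ fun τ _ => ?_
    exact (tendsto_const_nhds.mul hsl).mul
      ((exp_continuous.tendsto (τ • x)).comp (hAt.const_smul τ))
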